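/- On a metric compactum (X, ρ), the function ρ_I(μ_1, μ_2) = inf{ sup{ ρ(x, y) : (x, y) ∈ supp ξ } : ξ ∈ Λ(μ_1, μ_2) } defines a metric on the space I(X) of idempotent probability measures. -/

import Mathlib

/-- An idempotent probability measure on `X`: a functional on `C(X, ℝ)` preserving constants,
shifting under addition of constants, and turning pointwise max into max. -/
def IsIPM (X : Type*) [TopologicalSpace X] (μ : C(X, ℝ) → ℝ) : Prop :=
  (∀ c : ℝ, μ (ContinuousMap.const X c) = c) ∧
  (∀ (φ : C(X, ℝ)) (c : ℝ), μ (φ + ContinuousMap.const X c) = μ φ + c) ∧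
  (∀ φ ψ : C(X, ℝ), μ (φ ⊔ ψ) = max (μ φ) (μ ψ))


/-- Pushforward of a functional along a continuous map: `I(f)(μ)(φ) = μ(φ ∘ f)`. -/
def IPMmap {X Y : Type*} [TopologicalSpace X] [TopologicalSpace Y]
    (f : C(X, Y)) (μ : C(X, ℝ) → ℝ) : C(Y, ℝ) → ℝ :=
  fun φ => μ (φ.comp f)


/-- The support of `μ`: intersection of all closed `A ⊆ X` such that `μ` comes from an
idempotent probability measure on `A`. -/
def IPMsupp {X : Type*} [TopologicalSpace X] (μ : C(X, ℝ) → ℝ) : Set X :=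
  ⋂₀ {A : Set X | IsClosed A ∧ ∃ ν : C(A, ℝ) → ℝ, IsIPM A ν ∧
      ∀ φ : C(X, ℝ), μ φ = ν (φ.restrict A)}

/-- The set `Λ(μ₁, μ₂)` of admissible measures on `X × X` with marginals `μ₁`, `μ₂`. -/
def AdmSet {X : Type*} [TopologicalSpace X] (μ₁ μ₂ : C(X, ℝ) → ℝ) :
    Set (C(X × X, ℝ) → ℝ) :=
  {ξ | IsIPM (X × X) ξ ∧ IPMmap ContinuousMap.fst ξ = μ₁ ∧ IPMmap ContinuousMap.snd ξ = μ₂}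

/-- `ρ_I(μ₁, μ₂) = inf { sup { d(x,y) : (x,y) ∈ supp ξ } : ξ ∈ Λ(μ₁, μ₂) }`,
with respect to a distance function `d` on `X`. -/
noncomputable def rhoID {X : Type*} [TopologicalSpace X] (d : X → X → ℝ)
    (μ₁ μ₂ : C(X, ℝ) → ℝ) : ℝ :=
  sInf ((fun ξ => sSup ((fun p : X × X => d p.1 p.2) '' IPMsupp ξ)) '' AdmSet μ₁ μ₂)

namespace RhoI



/-- adding a constant commutes with nonempty suprema in `EReal`. -/
lemma iSup_add_const {ι : Sort*} [Nonempty ι] (f : ι → EReal) (c : EReal) :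
    (⨆ i, f i) + c = ⨆ i, (f i + c) := by
  induction c using EReal.rec with
  | bot => simp
  | coe r =>
    refine le_antisymm ?_ (iSup_le fun i => add_le_add_left (le_iSup f i) _)
    have h1 : (⨆ i, f i) ≤ (⨆ i, (f i + (r : EReal))) - (r : EReal) := by
      refine iSup_le fun i => ?_
      have : f i + (r : EReal) ≤ ⨆ i, (f i + (r : EReal)) := le_iSup (fun i => f i + (r : EReal)) i
      calc f i = f i + (r : EReal) - (r : EReal) := by rw [EReal.add_sub_cancel_right]
        _ ≤ (⨆ i, (f i + (r : EReal))) - (r : EReal) := by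
            rw [sub_eq_add_neg, sub_eq_add_neg]; exact add_le_add_left this _
    calc (⨆ i, f i) + (r : EReal) ≤ ((⨆ i, (f i + (r : EReal))) - (r : EReal)) + (r : EReal) :=
          add_le_add_left h1 _
      _ = ⨆ i, (f i + (r : EReal)) := EReal.sub_add_cancel
  | top =>
    by_cases hall : ∀ i, f i = ⊥
    · simp [hall, iSup_const]
    · push_neg at hall
      obtain ⟨i, hi⟩ := hall
      have h1 : (⨆ j, f j) + ⊤ = ⊤ :=
        EReal.add_top_of_ne_bot (fun h => hi (le_bot_iff.mp (h ▸ le_iSup f i)))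
      have h2 : (⨆ j, (f j + ⊤)) = ⊤ :=
        top_le_iff.mp ((EReal.add_top_of_ne_bot hi).symm.trans_le (le_iSup (fun j => f j + (⊤:EReal)) i))
      rw [h1, h2]

lemma const_add_iSup {ι : Sort*} [Nonempty ι] (f : ι → EReal) (c : EReal) :
    c + (⨆ i, f i) = ⨆ i, (c + f i) := by
  rw [add_comm, iSup_add_const]
  exact iSup_congr fun i => add_comm _ _

lemma ereal_le_of_forall {a b : EReal} (h : ∀ c : ℝ, b < (c : EReal) → a ≤ (c : EReal)) :
    a ≤ b := by
  by_contra hab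
  push_neg at hab
  obtain ⟨d, hd1, hd2⟩ := exists_between hab
  have hdt : d ≠ ⊤ := hd2.ne_top
  have hdb : d ≠ ⊥ := (bot_le.trans_lt hd1).ne'
  have hd' : ((d.toReal : ℝ) : EReal) = d := EReal.coe_toReal hdt hdb
  have := h d.toReal (hd' ▸ hd1)
  rw [hd'] at this
  exact absurd hd2 (not_lt.mpr this)

lemma add_max (x : EReal) (u v : EReal) : x + (u ⊔ v) = (x + u) ⊔ (x + v) := by
  rcases le_total u v with h | h
  · rw [sup_eq_right.mpr h, sup_eq_right.mpr (add_le_add_right h x)]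
  · rw [sup_eq_left.mpr h, sup_eq_left.mpr (add_le_add_right h x)]


variable {Y : Type*} [TopologicalSpace Y] {μ : C(Y, ℝ) → ℝ}

lemma ipm_nonempty (h : IsIPM Y μ) : Nonempty Y := by
  by_contra hY
  have h01 : ContinuousMap.const Y (0:ℝ) = ContinuousMap.const Y 1 := by
    ext y; exact absurd ⟨y⟩ hY
  have := (h.1 0).symm.trans (h01 ▸ h.1 1)
  norm_num at this

lemma ipm_mono (h : IsIPM Y μ) {f g : C(Y, ℝ)} (hfg : f ≤ g) : μ f ≤ μ g := by
  have : f ⊔ g = g := sup_eq_right.mpr hfg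
  have h2 := h.2.2 f g
  rw [this] at h2
  rw [h2]; exact le_max_left _ _

/-- density of an IPM, with values in `EReal`. -/
noncomputable def dens (μ : C(Y, ℝ) → ℝ) (y : Y) : EReal :=
  ⨅ φ : C(Y, ℝ), ((μ φ - φ y : ℝ) : EReal)

lemma dens_le (y : Y) (φ : C(Y, ℝ)) : dens μ y ≤ ((μ φ - φ y : ℝ) : EReal) :=
  iInf_le _ _

lemma dens_nonpos (h : IsIPM Y μ) (y : Y) : dens μ y ≤ 0 := by
  have := dens_le (μ := μ) y (ContinuousMap.const Y 0)
  rw [h.1 0] at this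
  simpa using this

lemma dens_add_le (y : Y) (φ : C(Y, ℝ)) : dens μ y + (φ y : EReal) ≤ ((μ φ : ℝ) : EReal) := by
  have h := dens_le (μ := μ) y φ
  calc dens μ y + (φ y : EReal) ≤ ((μ φ - φ y : ℝ) : EReal) + (φ y : EReal) :=
        add_le_add_left h _
    _ = ((μ φ : ℝ) : EReal) := by rw [← EReal.coe_add]; norm_num

/-- The representation theorem: `μ φ = ⨆ y, dens μ y + φ y`. -/
lemma dens_rep [CompactSpace Y] (h : IsIPM Y μ) (φ : C(Y, ℝ)) :
    (⨆ y, dens μ y + (φ y : EReal)) = ((μ φ : ℝ) : EReal) := by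
  refine le_antisymm (iSup_le fun y => dens_add_le y φ) ?_
  by_contra hlt
  push_neg at hlt
  obtain ⟨c', hc1, hc2⟩ := exists_between hlt
  have hc'top : c' ≠ ⊤ := (hc2.trans_le le_top).ne
  have hc'bot : c' ≠ ⊥ := (bot_le.trans_lt (lt_of_le_of_lt bot_le hc1)).ne'
  set c : ℝ := c'.toReal with hc
  have hc' : (c : EReal) = c' := EReal.coe_toReal hc'top hc'bot
  rw [← hc'] at hc1 hc2
  -- each y admits ψ with μ ψ - ψ y < c - φ y
  have key : ∀ y : Y, ∃ ψ : C(Y, ℝ), μ ψ - ψ y < c - φ y := by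
    intro y
    have h1 : dens μ y + (φ y : EReal) < (c : EReal) := lt_of_le_of_lt (le_iSup (fun y => dens μ y + (φ y : EReal)) y) hc1
    have h2 : dens μ y < ((c - φ y : ℝ) : EReal) := by
      by_contra h3
      push_neg at h3
      have := add_le_add_left h3 ((φ y : ℝ) : EReal)
      rw [← EReal.coe_add] at this
      have h4 : ((c - φ y + φ y : ℝ) : EReal) = (c : EReal) := by norm_num
      rw [h4] at this
      exact absurd h1 (not_lt.mpr this)
    rw [dens, iInf_lt_iff] at h2
    obtain ⟨ψ, hψ⟩ := h2
    exact ⟨ψ, EReal.coe_lt_coe_iff.mp hψ⟩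
  -- finite subcover
  have hY : Nonempty Y := ipm_nonempty h
  set V : C(Y, ℝ) → Set Y := fun ψ => {y | μ ψ - ψ y < c - φ y} with hV
  have hVopen : ∀ ψ, IsOpen (V ψ) := by
    intro ψ
    have : IsOpen {y : Y | μ ψ - ψ y < c - φ y} :=
      isOpen_lt (by continuity) (by continuity)
    exact this
  have hcover : (Set.univ : Set Y) ⊆ ⋃ ψ, V ψ := by
    intro y _
    obtain ⟨ψ, hψ⟩ := key y
    exact Set.mem_iUnion.mpr ⟨ψ, hψ⟩
  obtain ⟨t, ht⟩ := isCompact_univ.elim_finite_subcover V hVopen hcover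
  have htne : t.Nonempty := by
    rcases hY with ⟨y⟩
    have := ht (Set.mem_univ y)
    simp only [Set.mem_iUnion] at this
    obtain ⟨ψ, hψt, _⟩ := this
    exact ⟨ψ, hψt⟩
  set χ : C(Y, ℝ) := t.sup' htne fun ψ => ψ + ContinuousMap.const Y (c - μ ψ) with hχ
  have hμχ : μ χ = c := by
    rw [hχ, Finset.comp_sup'_eq_sup'_comp htne μ (fun x y => h.2.2 x y)]
    have : ∀ ψ ∈ t, (μ ∘ fun ψ => ψ + ContinuousMap.const Y (c - μ ψ)) ψ = c := by
      intro ψ _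
      simp only [Function.comp_apply, h.2.1]
      ring
    rw [Finset.sup'_congr htne rfl this, Finset.sup'_const]
  have hφχ : φ ≤ χ := by
    intro y
    have := ht (Set.mem_univ y)
    simp only [Set.mem_iUnion] at this
    obtain ⟨ψ, hψt, hψy⟩ := this
    have h5 : φ y ≤ ψ y + (c - μ ψ) := by
      have : μ ψ - ψ y < c - φ y := hψy
      linarith
    calc φ y ≤ (ψ + ContinuousMap.const Y (c - μ ψ)) y := by simpa using h5
      _ ≤ χ y := by
          have := Finset.le_sup' (fun ψ : C(Y,ℝ) => ψ + ContinuousMap.const Y (c - μ ψ)) hψt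
          exact ContinuousMap.le_def.mp this y
  have : μ φ ≤ c := hμχ ▸ ipm_mono h hφχ
  exact absurd hc2 (not_lt.mpr (EReal.coe_le_coe_iff.mpr this))

section C3
variable {Y : Type*} [TopologicalSpace Y] {lam : Y → EReal}

lemma nonempty_of_iSup {ι : Sort*} {f : ι → EReal} (hs : (⨆ i, f i) = 0) : Nonempty ι := by
  by_contra hι
  haveI := not_nonempty_iff.mp hι
  rw [iSup_of_empty f] at hs
  simp at hs

/-- functional defined by a density -/
noncomputable def Iof (lam : Y → EReal) (φ : C(Y, ℝ)) : ℝ :=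
  (⨆ y, lam y + (φ y : EReal)).toReal

variable [CompactSpace Y]

lemma Iof_eq (h0 : ∀ y, lam y ≤ 0) (hs : (⨆ y, lam y) = 0) (φ : C(Y, ℝ)) :
    ((Iof lam φ : ℝ) : EReal) = ⨆ y, lam y + (φ y : EReal) := by
  have hY : Nonempty Y := nonempty_of_iSup hs
  have hub : (⨆ y, lam y + (φ y : EReal)) ≤ ((‖φ‖ : ℝ) : EReal) := by
    refine iSup_le fun y => ?_
    have h1 : (φ y : EReal) ≤ ((‖φ‖ : ℝ) : EReal) := by
      refine EReal.coe_le_coe_iff.mpr ((le_abs_self _).trans ?_)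
      rw [← Real.norm_eq_abs]; exact φ.norm_coe_le_norm y
    calc lam y + (φ y : EReal) ≤ 0 + ((‖φ‖:ℝ) : EReal) := add_le_add (h0 y) h1
      _ = ((‖φ‖:ℝ) : EReal) := zero_add _
  have hlb : ((-1 - ‖φ‖ : ℝ) : EReal) ≤ ⨆ y, lam y + (φ y : EReal) := by
    have h1 : ((-1 : ℝ) : EReal) < ⨆ y, lam y := by
      rw [hs, ← EReal.coe_zero]; exact EReal.coe_lt_coe_iff.mpr (by norm_num)
    rw [lt_iSup_iff] at h1
    obtain ⟨y, hy⟩ := h1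
    have h2 : ((-‖φ‖ : ℝ) : EReal) ≤ (φ y : EReal) := by
      rw [EReal.coe_le_coe_iff]
      exact neg_le_of_abs_le (by rw [← Real.norm_eq_abs]; exact φ.norm_coe_le_norm y)
    calc ((-1 - ‖φ‖ : ℝ) : EReal) = ((-1 : ℝ) : EReal) + ((-‖φ‖ : ℝ) : EReal) := by
          rw [← EReal.coe_add]; exact congrArg _ (by ring)
      _ ≤ lam y + (φ y : EReal) := add_le_add hy.le h2
      _ ≤ _ := le_iSup (fun y => lam y + (φ y : EReal)) y
  have hne_top : (⨆ y, lam y + (φ y : EReal)) ≠ ⊤ := (hub.trans_lt (EReal.coe_lt_top _)).ne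
  have hne_bot : (⨆ y, lam y + (φ y : EReal)) ≠ ⊥ := ((EReal.bot_lt_coe _).trans_le hlb).ne'
  exact EReal.coe_toReal hne_top hne_bot

lemma Iof_isIPM (h0 : ∀ y, lam y ≤ 0) (hs : (⨆ y, lam y) = 0) : IsIPM Y (Iof lam) := by
  have hY : Nonempty Y := nonempty_of_iSup hs
  refine ⟨fun c => ?_, fun φ c => ?_, fun φ ψ => ?_⟩
  · have : (⨆ y, lam y + ((ContinuousMap.const Y c) y : EReal)) = ((c:ℝ) : EReal) := by
      simp only [ContinuousMap.const_apply]
      rw [← RhoI.iSup_add_const, hs, zero_add]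
    rw [Iof, this, EReal.toReal_coe]
  · have h1 := Iof_eq h0 hs (φ + ContinuousMap.const Y c)
    have h2 : (⨆ y, lam y + (((φ + ContinuousMap.const Y c) y : ℝ) : EReal))
        = ((Iof lam φ + c : ℝ) : EReal) := by
      have : ∀ y : Y, lam y + (((φ + ContinuousMap.const Y c) y : ℝ) : EReal)
          = (lam y + (φ y : EReal)) + ((c:ℝ) : EReal) := by
        intro y
        simp only [ContinuousMap.add_apply, ContinuousMap.const_apply, EReal.coe_add]
        rw [add_assoc]
      rw [iSup_congr this, ← RhoI.iSup_add_const, ← Iof_eq h0 hs φ, ← EReal.coe_add]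
    exact EReal.coe_eq_coe_iff.mp (h1.trans h2)
  · have h2 : (⨆ y, lam y + (((φ ⊔ ψ) y : ℝ) : EReal))
        = ((max (Iof lam φ) (Iof lam ψ) : ℝ) : EReal) := by
      have : ∀ y : Y, lam y + (((φ ⊔ ψ) y : ℝ) : EReal)
          = (lam y + (φ y : EReal)) ⊔ (lam y + (ψ y : EReal)) := by
        intro y
        rw [ContinuousMap.sup_apply]
        have hcoe : (((φ y ⊔ ψ y : ℝ)) : EReal) = ((φ y : ℝ) : EReal) ⊔ ((ψ y : ℝ) : EReal) := by
          rcases le_total (φ y) (ψ y) with h | h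
          · rw [sup_eq_right.mpr h, sup_eq_right.mpr (EReal.coe_le_coe_iff.mpr h)]
          · rw [sup_eq_left.mpr h, sup_eq_left.mpr (EReal.coe_le_coe_iff.mpr h)]
        rw [hcoe, RhoI.add_max]
      rw [iSup_congr this, iSup_sup_eq, ← Iof_eq h0 hs φ, ← Iof_eq h0 hs ψ]
      rcases le_total (Iof lam φ) (Iof lam ψ) with h | h
      · rw [sup_eq_right.mpr (EReal.coe_le_coe_iff.mpr h), max_eq_right h]
      · rw [sup_eq_left.mpr (EReal.coe_le_coe_iff.mpr h), max_eq_left h]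
    exact EReal.coe_eq_coe_iff.mp ((Iof_eq h0 hs (φ ⊔ ψ)).trans h2)

end C3

section C4
variable {Y : Type*} [TopologicalSpace Y] {μ ξ : C(Y, ℝ) → ℝ} {lam : Y → EReal}

/-- The family of closed sets carrying `μ`. -/
def Fam (μ : C(Y, ℝ) → ℝ) : Set (Set Y) :=
  {A : Set Y | IsClosed A ∧ ∃ ν : C(A, ℝ) → ℝ, IsIPM A ν ∧
      ∀ φ : C(Y, ℝ), μ φ = ν (φ.restrict A)}

lemma IPMsupp_eq : IPMsupp μ = ⋂₀ Fam μ := rfl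

lemma dens_bot_of_not_mem {M : Type*} [MetricSpace M] {μ : C(M, ℝ) → ℝ} {A : Set M}
    (hA : A ∈ Fam μ) {y : M} (hy : y ∉ A) : dens μ y = ⊥ := by
  obtain ⟨hAc, ν, hν, hcomp⟩ := hA
  have hAne : A.Nonempty := Set.nonempty_coe_sort.mp (ipm_nonempty hν)
  have hd : 0 < Metric.infDist y A := (hAc.notMem_iff_infDist_pos hAne).mp hy
  have key : ∀ K : ℝ, 0 ≤ K → dens μ y ≤ ((-(K * Metric.infDist y A) : ℝ) : EReal) := by
    intro K hK
    set φK : C(M, ℝ) := ⟨fun p => K * Metric.infDist p A,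
      (continuous_const.mul (Metric.continuous_infDist_pt A))⟩ with hφK
    have hres : φK.restrict A = ContinuousMap.const A 0 := by
      ext a
      simp [hφK, Metric.infDist_zero_of_mem a.2]
    have hμφ : μ φK = 0 := by rw [hcomp φK, hres, hν.1]
    have := dens_le (μ := μ) y φK
    rw [hμφ] at this
    simpa [hφK] using this
  rw [EReal.eq_bot_iff_forall_lt]
  intro b
  have hKpos : (0:ℝ) ≤ (|b| + 1) / Metric.infDist y A := by positivity
  refine lt_of_le_of_lt (key _ hKpos) (EReal.coe_lt_coe_iff.mpr ?_)
  have : (|b| + 1) / Metric.infDist y A * Metric.infDist y A = |b| + 1 := by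
    field_simp
  rw [this]
  have := neg_abs_le b
  linarith

lemma mem_supp_of_dens_ne_bot {M : Type*} [MetricSpace M] {μ : C(M, ℝ) → ℝ} {y : M}
    (h : dens μ y ≠ ⊥) : y ∈ IPMsupp μ := by
  rw [IPMsupp_eq]
  intro A hA
  by_contra hy
  exact h (dens_bot_of_not_mem hA hy)

lemma iSup_subtype_eq {A : Set Y} {g : Y → EReal} (hg : ∀ y, y ∉ A → g y = ⊥) :
    (⨆ a : A, g (a : Y)) = ⨆ y, g y := by
  refine le_antisymm (iSup_le fun a => le_iSup g (a : Y)) (iSup_le fun y => ?_)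
  by_cases hy : y ∈ A
  · exact le_iSup (fun a : A => g (a : Y)) ⟨y, hy⟩
  · rw [hg y hy]; exact bot_le

lemma Iof_mem_Fam [CompactSpace Y] (h0 : ∀ y, lam y ≤ 0) (hs : (⨆ y, lam y) = 0)
    {A : Set Y} (hAc : IsClosed A) (hsub : ∀ y, lam y ≠ ⊥ → y ∈ A) :
    A ∈ Fam (Iof lam) := by
  haveI : CompactSpace A := isCompact_iff_compactSpace.mp hAc.isCompact
  have hbot : ∀ y, y ∉ A → lam y = ⊥ := fun y hy => by
    by_contra h; exact hy (hsub y h)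
  set lam' : A → EReal := fun a => lam (a : Y) with hlam'
  have h0' : ∀ a : A, lam' a ≤ 0 := fun a => h0 _
  have hs' : (⨆ a : A, lam' a) = 0 := by
    rw [hlam']; rw [iSup_subtype_eq hbot]; exact hs
  refine ⟨hAc, Iof lam', Iof_isIPM h0' hs', fun φ => ?_⟩
  have : (⨆ y, lam y + ((φ y : ℝ) : EReal))
      = ⨆ a : A, (lam' a + (((φ.restrict A) a : ℝ) : EReal)) := by
    rw [show (fun a : A => lam' a + (((φ.restrict A) a : ℝ) : EReal))
        = fun a : A => lam (a : Y) + ((φ (a : Y) : ℝ) : EReal) from funext fun a => by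
          rw [ContinuousMap.restrict_apply]]
    exact (iSup_subtype_eq (fun y hy => by rw [hbot y hy, EReal.bot_add])).symm
  rw [Iof, Iof, this]

lemma supp_Iof_subset [CompactSpace Y] (h0 : ∀ y, lam y ≤ 0) (hs : (⨆ y, lam y) = 0)
    {A : Set Y} (hAc : IsClosed A) (hsub : ∀ y, lam y ≠ ⊥ → y ∈ A) :
    IPMsupp (Iof lam) ⊆ A := by
  rw [IPMsupp_eq]
  exact Set.sInter_subset_of_mem (Iof_mem_Fam h0 hs hAc hsub)

lemma dens_le_dens_map {Z : Type*} [TopologicalSpace Z] (f : C(Y, Z)) (y : Y) :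
    dens ξ y ≤ dens (IPMmap f ξ) (f y) := by
  refine le_iInf fun φ => iInf_le_of_le (φ.comp f) (le_of_eq ?_)
  simp [IPMmap]

lemma dens_map_le [CompactSpace Y] {Z : Type*} [MetricSpace Z] (hξ : IsIPM Y ξ)
    (f : C(Y, Z)) (z : Z) :
    dens (IPMmap f ξ) z ≤ ⨆ y : {y : Y // f y = z}, dens ξ (y : Y) := by
  classical
  refine ereal_le_of_forall fun c hc => ?_
  have hfib : ∀ y : Y, f y = z → dens ξ y < (c : EReal) := fun y hy =>
    lt_of_le_of_lt (le_iSup (fun w : {y : Y // f y = z} => dens ξ (w : Y)) ⟨y, hy⟩) hc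
  set V : C(Y, ℝ) → Set Y := fun Φ => {y | ξ Φ - Φ y < c} with hV
  have hVopen : ∀ Φ, IsOpen (V Φ) := fun Φ => isOpen_lt (by continuity) continuous_const
  have hcover : (f ⁻¹' {z}) ⊆ ⋃ Φ, V Φ := by
    intro y hy
    have h1 := hfib y hy
    rw [dens, iInf_lt_iff] at h1
    obtain ⟨Φ, hΦ⟩ := h1
    exact Set.mem_iUnion.mpr ⟨Φ, EReal.coe_lt_coe_iff.mp hΦ⟩
  have hK : IsCompact (f ⁻¹' {z}) :=
    (isClosed_singleton.preimage f.continuous).isCompact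
  obtain ⟨t, ht⟩ := hK.elim_finite_subcover V hVopen hcover
  set W : Set Y := ⋃ Φ ∈ t, V Φ with hW
  have hWopen : IsOpen W := isOpen_biUnion fun Φ _ => hVopen Φ
  have hWdens : ∀ y ∈ W, dens ξ y < (c : EReal) := by
    intro y hy
    rw [hW, Set.mem_iUnion₂] at hy
    obtain ⟨Φ, _, hΦ⟩ := hy
    exact lt_of_le_of_lt (dens_le y Φ) (EReal.coe_lt_coe_iff.mpr hΦ)
  set B : Set Z := f '' Wᶜ with hB
  have hBclosed : IsClosed B := (hWopen.isClosed_compl.isCompact.image f.continuous).isClosed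
  have hzB : z ∉ B := by
    rintro ⟨y, hyW, hyz⟩
    exact hyW (ht (by simp [hyz]))
  set d : ℝ := Metric.infDist z B with hd
  set K : ℝ := if B.Nonempty then (|c| + 1) / d else 0 with hKdef
  have hKnonneg : 0 ≤ K := by
    rw [hKdef]
    split_ifs with hBne
    · have hdpos : 0 < d := (hBclosed.notMem_iff_infDist_pos hBne).mp hzB
      positivity
    · exact le_refl 0
  set ψ : C(Z, ℝ) := ⟨fun w => -(K * dist w z), ((continuous_const.mul (continuous_id.dist continuous_const)).neg)⟩ with hψ
  have hterm : ∀ y : Y, dens ξ y + ((ψ (f y) : ℝ) : EReal) ≤ (c : EReal) := by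
    intro y
    by_cases hy : y ∈ W
    · have h1 : dens ξ y ≤ (c : EReal) := (hWdens y hy).le
      have h2 : ψ (f y) ≤ 0 := by
        rw [hψ]
        simp only [ContinuousMap.coe_mk]
        have : 0 ≤ K * dist (f y) z := mul_nonneg hKnonneg dist_nonneg
        linarith
      calc dens ξ y + ((ψ (f y) : ℝ) : EReal) ≤ (c : EReal) + ((0:ℝ) : EReal) :=
            add_le_add h1 (EReal.coe_le_coe_iff.mpr h2)
        _ = (c : EReal) := by norm_num
    · have hBne : B.Nonempty := ⟨f y, ⟨y, hy, rfl⟩⟩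
      have hdpos : 0 < d := (hBclosed.notMem_iff_infDist_pos hBne).mp hzB
      have hdist : d ≤ dist (f y) z := by
        rw [dist_comm]
        exact Metric.infDist_le_dist_of_mem ⟨y, hy, rfl⟩
      have hψval : ψ (f y) ≤ -(|c| + 1) := by
        rw [hψ]
        simp only [ContinuousMap.coe_mk]
        have hKd : K * d = |c| + 1 := by
          rw [hKdef, if_pos hBne]; field_simp
        have : K * d ≤ K * dist (f y) z := mul_le_mul_of_nonneg_left hdist hKnonneg
        rw [hKd] at this
        linarith
      have h2 : ψ (f y) ≤ c := by
        have := neg_abs_le c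
        linarith
      calc dens ξ y + ((ψ (f y) : ℝ) : EReal) ≤ 0 + ((c : ℝ) : EReal) :=
            add_le_add (dens_nonpos hξ y) (EReal.coe_le_coe_iff.mpr h2)
        _ = (c : EReal) := by norm_num
  have hsum : ((ξ (ψ.comp f) : ℝ) : EReal) ≤ (c : EReal) := by
    rw [← dens_rep hξ (ψ.comp f)]
    exact iSup_le fun y => by
      have : ((ψ.comp f) y : ℝ) = ψ (f y) := rfl
      rw [this]; exact hterm y
  have hξψ : ξ (ψ.comp f) ≤ c := EReal.coe_le_coe_iff.mp hsum
  have hψz : ψ z = 0 := by rw [hψ]; simp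
  calc dens (IPMmap f ξ) z ≤ ((IPMmap f ξ ψ - ψ z : ℝ) : EReal) := dens_le z ψ
    _ ≤ (c : EReal) := by
        rw [hψz, sub_zero]
        exact EReal.coe_le_coe_iff.mpr hξψ

end C4

section C5
variable {X : Type*} [MetricSpace X] [CompactSpace X]

lemma distimg_bddAbove (s : Set (X × X)) :
    BddAbove ((fun p : X × X => dist p.1 p.2) '' s) := by
  refine ⟨Metric.diam (Set.univ : Set X), ?_⟩
  rintro r ⟨p, _, rfl⟩
  exact Metric.dist_le_diam_of_mem isCompact_univ.isBounded trivial trivial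

lemma rhoset_nonneg {μ ν : C(X, ℝ) → ℝ} :
    ∀ b ∈ (fun ξ => sSup ((fun p : X × X => dist p.1 p.2) '' IPMsupp ξ)) '' AdmSet μ ν,
      0 ≤ b := by
  rintro b ⟨ξ, _, rfl⟩
  exact Real.sSup_nonneg (by rintro r ⟨p, _, rfl⟩; exact dist_nonneg)

lemma rhoset_bddBelow {μ ν : C(X, ℝ) → ℝ} :
    BddBelow ((fun ξ => sSup ((fun p : X × X => dist p.1 p.2) '' IPMsupp ξ)) '' AdmSet μ ν) :=
  ⟨0, fun b hb => rhoset_nonneg b hb⟩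

lemma rhoI_nonneg (μ ν : C(X, ℝ) → ℝ) : 0 ≤ rhoID (fun x y : X => dist x y) μ ν :=
  Real.sInf_nonneg rhoset_nonneg

lemma dens_iSup_zero {Y : Type*} [TopologicalSpace Y] [CompactSpace Y] {μ : C(Y, ℝ) → ℝ}
    (hμ : IsIPM Y μ) : (⨆ y, dens μ y) = 0 := by
  have h := dens_rep hμ (ContinuousMap.const Y 0)
  have h1 : ∀ y : Y, dens μ y + (((ContinuousMap.const Y 0) y : ℝ) : EReal) = dens μ y := by
    intro y; simp
  rw [iSup_congr h1, hμ.1 0] at h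
  simpa using h

lemma Iof_mem_AdmSet {μ ν : C(X, ℝ) → ℝ} {lam : X × X → EReal}
    (h0 : ∀ p, lam p ≤ 0) (hs : (⨆ p, lam p) = 0)
    (hfst : ∀ φ : C(X, ℝ), (⨆ p : X × X, lam p + ((φ p.1 : ℝ) : EReal)) = ((μ φ : ℝ) : EReal))
    (hsnd : ∀ φ : C(X, ℝ), (⨆ p : X × X, lam p + ((φ p.2 : ℝ) : EReal)) = ((ν φ : ℝ) : EReal)) :
    Iof lam ∈ AdmSet μ ν := by
  refine ⟨Iof_isIPM h0 hs, funext fun φ => ?_, funext fun φ => ?_⟩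
  · have : IPMmap ContinuousMap.fst (Iof lam) φ = Iof lam (φ.comp ContinuousMap.fst) := rfl
    rw [this, Iof]
    have h2 : ∀ p : X × X, lam p + (((φ.comp ContinuousMap.fst) p : ℝ) : EReal)
        = lam p + ((φ p.1 : ℝ) : EReal) := fun p => rfl
    rw [iSup_congr h2, hfst φ, EReal.toReal_coe]
  · have : IPMmap ContinuousMap.snd (Iof lam) φ = Iof lam (φ.comp ContinuousMap.snd) := rfl
    rw [this, Iof]
    have h2 : ∀ p : X × X, lam p + (((φ.comp ContinuousMap.snd) p : ℝ) : EReal)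
        = lam p + ((φ p.2 : ℝ) : EReal) := fun p => rfl
    rw [iSup_congr h2, hsnd φ, EReal.toReal_coe]

/-- the product measure: density `dens μ p.1 + dens ν p.2`. -/
lemma prod_mem_AdmSet {μ ν : C(X, ℝ) → ℝ} (hμ : IsIPM X μ) (hν : IsIPM X ν) :
    Iof (fun p : X × X => dens μ p.1 + dens ν p.2) ∈ AdmSet μ ν := by
  haveI hμY : Nonempty X := ipm_nonempty hμ
  have h0 : ∀ p : X × X, dens μ p.1 + dens ν p.2 ≤ 0 := fun p => by
    calc dens μ p.1 + dens ν p.2 ≤ 0 + 0 := add_le_add (dens_nonpos hμ _) (dens_nonpos hν _)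
      _ = 0 := add_zero 0
  refine Iof_mem_AdmSet h0 ?_ (fun φ => ?_) (fun φ => ?_)
  · rw [iSup_prod]
    have h1 : ∀ x : X, (⨆ y : X, dens μ x + dens ν y) = dens μ x := by
      intro x
      rw [← const_add_iSup, dens_iSup_zero hν, add_zero]
    rw [iSup_congr h1, dens_iSup_zero hμ]
  · rw [iSup_prod]
    have h1 : ∀ x : X, (⨆ y : X, dens μ x + dens ν y + ((φ x : ℝ) : EReal))
        = dens μ x + ((φ x : ℝ) : EReal) := by
      intro x
      have h2 : ∀ y : X, dens μ x + dens ν y + ((φ x : ℝ) : EReal)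
          = (dens μ x + ((φ x : ℝ) : EReal)) + dens ν y := fun y => add_right_comm _ _ _
      rw [iSup_congr h2, ← const_add_iSup, dens_iSup_zero hν, add_zero]
    rw [iSup_congr h1, dens_rep hμ φ]
  · rw [iSup_prod]
    have h1 : ∀ x : X, (⨆ y : X, dens μ x + dens ν y + ((φ y : ℝ) : EReal))
        = dens μ x + ((ν φ : ℝ) : EReal) := by
      intro x
      have h2 : ∀ y : X, dens μ x + dens ν y + ((φ y : ℝ) : EReal)
          = dens μ x + (dens ν y + ((φ y : ℝ) : EReal)) := fun y => add_assoc _ _ _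
      rw [iSup_congr h2, ← const_add_iSup, dens_rep hν φ]
    rw [iSup_congr h1, ← iSup_add_const, dens_iSup_zero hμ, zero_add]

lemma admset_nonempty {μ ν : C(X, ℝ) → ℝ} (hμ : IsIPM X μ) (hν : IsIPM X ν) :
    (AdmSet μ ν).Nonempty := ⟨_, prod_mem_AdmSet hμ hν⟩

lemma rhoset_nonempty {μ ν : C(X, ℝ) → ℝ} (hμ : IsIPM X μ) (hν : IsIPM X ν) :
    ((fun ξ => sSup ((fun p : X × X => dist p.1 p.2) '' IPMsupp ξ)) '' AdmSet μ ν).Nonempty :=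
  (admset_nonempty hμ hν).image _
end C5

section C6
variable {X : Type*} [MetricSpace X] [CompactSpace X]

lemma rhoI_self {μ : C(X, ℝ) → ℝ} (hμ : IsIPM X μ) :
    rhoID (fun x y : X => dist x y) μ μ = 0 := by
  classical
  haveI : Nonempty X := ipm_nonempty hμ
  set lamΔ : X × X → EReal := fun p => if p.1 = p.2 then dens μ p.1 else ⊥ with hlam
  have h0 : ∀ p, lamΔ p ≤ 0 := fun p => by
    rw [hlam]; dsimp only; split_ifs; exacts [dens_nonpos hμ _, bot_le]
  have hfst : ∀ φ : C(X, ℝ), (⨆ p : X × X, lamΔ p + ((φ p.1 : ℝ) : EReal))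
      = ((μ φ : ℝ) : EReal) := by
    intro φ
    rw [← dens_rep hμ φ]
    refine le_antisymm (iSup_le fun p => ?_) (iSup_le fun x => ?_)
    · by_cases h : p.1 = p.2
      · rw [hlam]; dsimp only; rw [if_pos h]
        exact le_iSup (fun x => dens μ x + ((φ x : ℝ) : EReal)) p.1
      · rw [hlam]; dsimp only; rw [if_neg h, EReal.bot_add]; exact bot_le
    · refine le_iSup_of_le (x, x) (le_of_eq ?_)
      rw [hlam]; dsimp only; rw [if_pos rfl]
  have hsnd : ∀ φ : C(X, ℝ), (⨆ p : X × X, lamΔ p + ((φ p.2 : ℝ) : EReal))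
      = ((μ φ : ℝ) : EReal) := by
    intro φ
    rw [← dens_rep hμ φ]
    refine le_antisymm (iSup_le fun p => ?_) (iSup_le fun x => ?_)
    · by_cases h : p.1 = p.2
      · rw [hlam]; dsimp only; rw [if_pos h, h]
        exact le_iSup (fun x => dens μ x + ((φ x : ℝ) : EReal)) p.2
      · rw [hlam]; dsimp only; rw [if_neg h, EReal.bot_add]; exact bot_le
    · refine le_iSup_of_le (x, x) (le_of_eq ?_)
      rw [hlam]; dsimp only; rw [if_pos rfl]
  have hs : (⨆ p, lamΔ p) = 0 := by
    have h1 := hfst (ContinuousMap.const X 0)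
    have h2 : ∀ p : X × X, lamΔ p + (((ContinuousMap.const X 0) p.1 : ℝ) : EReal) = lamΔ p := by
      intro p; simp
    rw [iSup_congr h2, hμ.1 0] at h1
    simpa using h1
  have hmem : Iof lamΔ ∈ AdmSet μ μ := Iof_mem_AdmSet h0 hs hfst hsnd
  have hsub : ∀ p : X × X, lamΔ p ≠ ⊥ → p ∈ Set.diagonal X := by
    intro p hp
    rw [hlam] at hp; dsimp only at hp
    by_cases h : p.1 = p.2
    · exact h
    · rw [if_neg h] at hp; exact absurd rfl hp
  have hsupp : IPMsupp (Iof lamΔ) ⊆ Set.diagonal X :=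
    supp_Iof_subset h0 hs isClosed_diagonal hsub
  have hval : sSup ((fun p : X × X => dist p.1 p.2) '' IPMsupp (Iof lamΔ)) ≤ 0 := by
    refine Real.sSup_le ?_ le_rfl
    rintro r ⟨p, hp, rfl⟩
    have h : p.1 = p.2 := hsupp hp
    show dist p.1 p.2 ≤ 0
    rw [h, dist_self]
  refine le_antisymm ?_ (rhoI_nonneg μ μ)
  exact (csInf_le rhoset_bddBelow ⟨Iof lamΔ, hmem, rfl⟩).trans hval

lemma rhoI_symm_le {μ ν : C(X, ℝ) → ℝ} (hμ : IsIPM X μ) (hν : IsIPM X ν) :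
    rhoID (fun x y : X => dist x y) ν μ ≤ rhoID (fun x y : X => dist x y) μ ν := by
  refine le_csInf (rhoset_nonempty hμ hν) ?_
  rintro b ⟨ξ, hξ, rfl⟩
  set lam' : X × X → EReal := fun q => dens ξ (q.2, q.1) with hlam'
  have h0 : ∀ q, lam' q ≤ 0 := fun q => dens_nonpos hξ.1 _
  have hreindex : ∀ g : X × X → EReal, (⨆ q : X × X, g (q.2, q.1)) = ⨆ p, g p := by
    intro g
    refine le_antisymm (iSup_le fun q => le_iSup g (q.2, q.1)) (iSup_le fun p => ?_)
    exact le_iSup_of_le (p.2, p.1) (le_of_eq rfl)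
  have hfst : ∀ φ : C(X, ℝ), (⨆ q : X × X, lam' q + ((φ q.1 : ℝ) : EReal))
      = ((ν φ : ℝ) : EReal) := by
    intro φ
    have h1 : (⨆ q : X × X, lam' q + ((φ q.1 : ℝ) : EReal))
        = ⨆ p : X × X, dens ξ p + ((φ p.2 : ℝ) : EReal) :=
      hreindex (fun p => dens ξ p + ((φ p.2 : ℝ) : EReal))
    rw [h1]
    have h2 := dens_rep hξ.1 (φ.comp ContinuousMap.snd)
    have h3 : ∀ p : X × X, dens ξ p + (((φ.comp ContinuousMap.snd) p : ℝ) : EReal)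
        = dens ξ p + ((φ p.2 : ℝ) : EReal) := fun p => rfl
    rw [iSup_congr h3] at h2
    rw [h2]
    have : ξ (φ.comp ContinuousMap.snd) = ν φ := by
      have := hξ.2.2
      calc ξ (φ.comp ContinuousMap.snd) = IPMmap ContinuousMap.snd ξ φ := rfl
        _ = ν φ := by rw [this]
    rw [this]
  have hsnd : ∀ φ : C(X, ℝ), (⨆ q : X × X, lam' q + ((φ q.2 : ℝ) : EReal))
      = ((μ φ : ℝ) : EReal) := by
    intro φ
    have h1 : (⨆ q : X × X, lam' q + ((φ q.2 : ℝ) : EReal))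
        = ⨆ p : X × X, dens ξ p + ((φ p.1 : ℝ) : EReal) :=
      hreindex (fun p => dens ξ p + ((φ p.1 : ℝ) : EReal))
    rw [h1]
    have h2 := dens_rep hξ.1 (φ.comp ContinuousMap.fst)
    have h3 : ∀ p : X × X, dens ξ p + (((φ.comp ContinuousMap.fst) p : ℝ) : EReal)
        = dens ξ p + ((φ p.1 : ℝ) : EReal) := fun p => rfl
    rw [iSup_congr h3] at h2
    rw [h2]
    have : ξ (φ.comp ContinuousMap.fst) = μ φ := by
      have := hξ.2.1
      calc ξ (φ.comp ContinuousMap.fst) = IPMmap ContinuousMap.fst ξ φ := rfl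
        _ = μ φ := by rw [this]
    rw [this]
  have hs : (⨆ q, lam' q) = 0 := by
    rw [hlam']
    rw [hreindex (dens ξ)]
    exact dens_iSup_zero hξ.1
  have hmem : Iof lam' ∈ AdmSet ν μ := Iof_mem_AdmSet h0 hs hfst hsnd
  have hA : IsClosed (Prod.swap ⁻¹' IPMsupp ξ : Set (X × X)) := by
    refine IsClosed.preimage continuous_swap ?_
    rw [IPMsupp_eq]
    exact isClosed_sInter fun B hB => hB.1
  have hsub : ∀ q : X × X, lam' q ≠ ⊥ → q ∈ (Prod.swap ⁻¹' IPMsupp ξ : Set (X × X)) :=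
    fun q hq => mem_supp_of_dens_ne_bot hq
  have hsupp : IPMsupp (Iof lam') ⊆ Prod.swap ⁻¹' IPMsupp ξ :=
    supp_Iof_subset h0 hs hA hsub
  have hval : sSup ((fun p : X × X => dist p.1 p.2) '' IPMsupp (Iof lam'))
      ≤ sSup ((fun p : X × X => dist p.1 p.2) '' IPMsupp ξ) := by
    refine Real.sSup_le ?_ (Real.sSup_nonneg (by rintro r ⟨p, _, rfl⟩; exact dist_nonneg))
    rintro r ⟨q, hq, rfl⟩
    have hmem' : (q.2, q.1) ∈ IPMsupp ξ := hsupp hq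
    show dist q.1 q.2 ≤ _
    rw [dist_comm]
    exact le_csSup (distimg_bddAbove _) ⟨(q.2, q.1), hmem', rfl⟩
  exact (csInf_le rhoset_bddBelow ⟨Iof lam', hmem, rfl⟩).trans hval

lemma rhoI_symm {μ ν : C(X, ℝ) → ℝ} (hμ : IsIPM X μ) (hν : IsIPM X ν) :
    rhoID (fun x y : X => dist x y) μ ν = rhoID (fun x y : X => dist x y) ν μ :=
  le_antisymm (rhoI_symm_le hν hμ) (rhoI_symm_le hμ hν)

lemma rhoI_eq_zero_imp {μ ν : C(X, ℝ) → ℝ} (hμ : IsIPM X μ) (hν : IsIPM X ν)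
    (h : rhoID (fun x y : X => dist x y) μ ν = 0) : μ = ν := by
  have key : ∀ φ : C(X, ℝ), ∀ ε : ℝ, 0 < ε → μ φ ≤ ν φ + ε ∧ ν φ ≤ μ φ + ε := by
    intro φ ε hε
    obtain ⟨δ, hδ, hunif⟩ := Metric.uniformContinuous_iff.mp
      (CompactSpace.uniformContinuous_of_continuous φ.continuous) ε hε
    have hlt : sInf ((fun ξ => sSup ((fun p : X × X => dist p.1 p.2) '' IPMsupp ξ))
        '' AdmSet μ ν) < δ := by
      have : rhoID (fun x y : X => dist x y) μ ν < δ := h ▸ hδ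
      exact this
    obtain ⟨b, ⟨ξ, hξ, rfl⟩, hbδ⟩ :=
      (csInf_lt_iff rhoset_bddBelow (rhoset_nonempty hμ hν)).mp hlt
    have hclose : ∀ p : X × X, dens ξ p ≠ ⊥ → dist (φ p.1) (φ p.2) < ε := by
      intro p hp
      have hps : p ∈ IPMsupp ξ := mem_supp_of_dens_ne_bot hp
      have h1 : dist p.1 p.2 ≤ sSup ((fun p : X × X => dist p.1 p.2) '' IPMsupp ξ) :=
        le_csSup (distimg_bddAbove _) ⟨p, hps, rfl⟩
      exact hunif (h1.trans_lt hbδ)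
    have hcomp : ∀ (f g : C(X × X, ℝ)),
        (∀ p : X × X, dens ξ p ≠ ⊥ → f p ≤ g p) → ξ f ≤ ξ g := by
      intro f g hfg
      have h1 : ((ξ f : ℝ) : EReal) ≤ ((ξ g : ℝ) : EReal) := by
        rw [← dens_rep hξ.1 f, ← dens_rep hξ.1 g]
        refine iSup_le fun p => ?_
        by_cases hp : dens ξ p = ⊥
        · rw [hp, EReal.bot_add]; exact bot_le
        · refine le_iSup_of_le p (add_le_add_right (EReal.coe_le_coe_iff.mpr (hfg p hp)) _)
      exact EReal.coe_le_coe_iff.mp h1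
    constructor
    · have h1 : ξ (φ.comp ContinuousMap.fst)
          ≤ ξ (φ.comp ContinuousMap.snd + ContinuousMap.const _ ε) := by
        refine hcomp _ _ fun p hp => ?_
        have := hclose p hp
        have h2 : |φ p.1 - φ p.2| < ε := by rwa [Real.dist_eq] at this
        have h3 : φ p.1 ≤ φ p.2 + ε := by cases abs_lt.mp h2; linarith
        simpa using h3
      rw [hξ.1.2.1] at h1
      have hμφ : ξ (φ.comp ContinuousMap.fst) = μ φ := by
        rw [show ξ (φ.comp ContinuousMap.fst) = IPMmap ContinuousMap.fst ξ φ from rfl, hξ.2.1]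
      have hνφ : ξ (φ.comp ContinuousMap.snd) = ν φ := by
        rw [show ξ (φ.comp ContinuousMap.snd) = IPMmap ContinuousMap.snd ξ φ from rfl, hξ.2.2]
      rw [hμφ, hνφ] at h1
      exact h1
    · have h1 : ξ (φ.comp ContinuousMap.snd)
          ≤ ξ (φ.comp ContinuousMap.fst + ContinuousMap.const _ ε) := by
        refine hcomp _ _ fun p hp => ?_
        have := hclose p hp
        have h2 : |φ p.1 - φ p.2| < ε := by rwa [Real.dist_eq] at this
        have h3 : φ p.2 ≤ φ p.1 + ε := by cases abs_lt.mp h2; linarith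
        simpa using h3
      rw [hξ.1.2.1] at h1
      have hμφ : ξ (φ.comp ContinuousMap.fst) = μ φ := by
        rw [show ξ (φ.comp ContinuousMap.fst) = IPMmap ContinuousMap.fst ξ φ from rfl, hξ.2.1]
      have hνφ : ξ (φ.comp ContinuousMap.snd) = ν φ := by
        rw [show ξ (φ.comp ContinuousMap.snd) = IPMmap ContinuousMap.snd ξ φ from rfl, hξ.2.2]
      rw [hμφ, hνφ] at h1
      exact h1
  funext φ
  have h1 : μ φ ≤ ν φ := le_of_forall_pos_le_add fun ε hε => (key φ ε hε).1
  have h2 : ν φ ≤ μ φ := le_of_forall_pos_le_add fun ε hε => (key φ ε hε).2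
  exact le_antisymm h1 h2

end C6

section C7
variable {X : Type*} [MetricSpace X] [CompactSpace X]

lemma ecancel {a c : EReal} (hc : c ≠ ⊤) (hac : a ≤ c) : a + (-c) + c = a := by
  induction c using EReal.rec with
  | bot =>
    rw [le_bot_iff.mp hac]
    simp
  | coe r =>
    rw [← EReal.coe_neg, add_assoc, ← EReal.coe_add]
    norm_num
  | top => exact absurd rfl hc

lemma ecancel2 {c : EReal} (hc : c ≠ ⊤) : c + (-c) ≤ 0 := by
  induction c using EReal.rec with
  | bot => simp
  | coe r => rw [← EReal.coe_neg, ← EReal.coe_add]; norm_num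
  | top => exact absurd rfl hc

lemma rhoI_triangle {μ ν κ : C(X, ℝ) → ℝ} (hμ : IsIPM X μ) (hν : IsIPM X ν)
    (hκ : IsIPM X κ) :
    rhoID (fun x y : X => dist x y) μ κ ≤
      rhoID (fun x y : X => dist x y) μ ν + rhoID (fun x y : X => dist x y) ν κ := by
  haveI : Nonempty X := ipm_nonempty hμ
  refine le_of_forall_pos_le_add fun η hη => ?_
  have hη2 : 0 < η / 2 := by linarith
  obtain ⟨r₁, ⟨ξ₁, hξ₁, hr₁⟩, hr₁lt⟩ :=
    (csInf_lt_iff rhoset_bddBelow (rhoset_nonempty hμ hν)).mp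
      (show rhoID (fun x y : X => dist x y) μ ν
        < rhoID (fun x y : X => dist x y) μ ν + η / 2 by linarith)
  obtain ⟨r₂, ⟨ξ₂, hξ₂, hr₂⟩, hr₂lt⟩ :=
    (csInf_lt_iff rhoset_bddBelow (rhoset_nonempty hν hκ)).mp
      (show rhoID (fun x y : X => dist x y) ν κ
        < rhoID (fun x y : X => dist x y) ν κ + η / 2 by linarith)
  set lam1 : X × X → EReal := dens ξ₁ with hl1
  set lam2 : X × X → EReal := dens ξ₂ with hl2
  set lnu : X → EReal := dens ν with hlnu
  have hlnu_ne_top : ∀ y, lnu y ≠ ⊤ :=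
    fun y => ((dens_nonpos hν y).trans_lt (by norm_num : (0:EReal) < ⊤)).ne
  have F1 : ∀ p : X × X, lam1 p ≤ lnu p.2 := by
    intro p
    have h := dens_le_dens_map (ξ := ξ₁) ContinuousMap.snd p
    rwa [hξ₁.2.2] at h
  have F2 : ∀ q : X × X, lam2 q ≤ lnu q.1 := by
    intro q
    have h := dens_le_dens_map (ξ := ξ₂) ContinuousMap.fst q
    rwa [hξ₂.2.1] at h
  have F3 : ∀ y : X, (⨆ x, lam1 (x, y)) = lnu y := by
    intro y
    refine le_antisymm (iSup_le fun x => F1 (x, y)) ?_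
    have h := dens_map_le hξ₁.1 ContinuousMap.snd y
    rw [hξ₁.2.2] at h
    refine h.trans (iSup_le fun w => ?_)
    obtain ⟨p, hp⟩ := w
    have : lam1 p = lam1 (p.1, y) := by
      have hp' : p.2 = y := hp
      have hpy : p = (p.1, y) := Prod.ext rfl hp'
      rw [← hpy]
    exact this.le.trans (le_iSup (fun x => lam1 (x, y)) p.1)
  have F4 : ∀ y : X, (⨆ z, lam2 (y, z)) = lnu y := by
    intro y
    refine le_antisymm (iSup_le fun z => F2 (y, z)) ?_
    have h := dens_map_le hξ₂.1 ContinuousMap.fst y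
    rw [hξ₂.2.1] at h
    refine h.trans (iSup_le fun w => ?_)
    obtain ⟨q, hq⟩ := w
    have : lam2 q = lam2 (y, q.2) := by
      have hq' : q.1 = y := hq
      have hqy : q = (y, q.2) := Prod.ext hq' rfl
      rw [← hqy]
    exact this.le.trans (le_iSup (fun z => lam2 (y, z)) q.2)
  set lam : X × X → EReal := fun p => ⨆ y, lam1 (p.1, y) + lam2 (y, p.2) + (-(lnu y)) with hlam
  -- inner marginal computations
  have K1 : ∀ x : X, (⨆ z, lam (x, z)) = ⨆ y, lam1 (x, y) := by
    intro x
    calc (⨆ z, lam (x, z)) = ⨆ z, ⨆ y, lam1 (x, y) + lam2 (y, z) + (-(lnu y)) := rfl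
      _ = ⨆ y, ⨆ z, lam1 (x, y) + lam2 (y, z) + (-(lnu y)) := iSup_comm
      _ = ⨆ y, lam1 (x, y) := by
          refine iSup_congr fun y => ?_
          have h1 : ∀ z : X, lam1 (x, y) + lam2 (y, z) + (-(lnu y))
              = (lam1 (x, y) + (-(lnu y))) + lam2 (y, z) := fun z => add_right_comm _ _ _
          rw [iSup_congr h1, ← const_add_iSup, F4 y]
          exact ecancel (hlnu_ne_top y) (F1 (x, y))
  have K2 : ∀ z : X, (⨆ x, lam (x, z)) = ⨆ y, lam2 (y, z) := by
    intro z
    calc (⨆ x, lam (x, z)) = ⨆ x, ⨆ y, lam1 (x, y) + lam2 (y, z) + (-(lnu y)) := rfl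
      _ = ⨆ y, ⨆ x, lam1 (x, y) + lam2 (y, z) + (-(lnu y)) := iSup_comm
      _ = ⨆ y, lam2 (y, z) := by
          refine iSup_congr fun y => ?_
          have h1 : ∀ x : X, lam1 (x, y) + lam2 (y, z) + (-(lnu y))
              = lam1 (x, y) + (lam2 (y, z) + (-(lnu y))) := fun x => add_assoc _ _ _
          rw [iSup_congr h1, ← iSup_add_const, F3 y]
          calc lnu y + (lam2 (y, z) + -(lnu y)) = (lam2 (y, z) + -(lnu y)) + lnu y :=
                add_comm _ _
            _ = lam2 (y, z) := ecancel (hlnu_ne_top y) (F2 (y, z))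
  have h0 : ∀ p : X × X, lam p ≤ 0 := by
    intro p
    refine iSup_le fun y => ?_
    calc lam1 (p.1, y) + lam2 (y, p.2) + (-(lnu y))
        ≤ (lnu y + 0) + (-(lnu y)) :=
          add_le_add (add_le_add (F1 (p.1, y)) (dens_nonpos hξ₂.1 (y, p.2))) le_rfl
      _ = lnu y + (-(lnu y)) := by rw [add_zero]
      _ ≤ 0 := ecancel2 (hlnu_ne_top y)
  have hs : (⨆ p, lam p) = 0 := by
    rw [iSup_prod]
    have h1 : ∀ x : X, (⨆ z, lam (x, z)) = ⨆ y, lam1 (x, y) := K1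
    rw [iSup_congr h1, ← iSup_prod]
    exact dens_iSup_zero hξ₁.1
  have hfst : ∀ φ : C(X, ℝ), (⨆ p : X × X, lam p + ((φ p.1 : ℝ) : EReal))
      = ((μ φ : ℝ) : EReal) := by
    intro φ
    rw [iSup_prod]
    have h1 : ∀ x : X, (⨆ z, lam (x, z) + ((φ x : ℝ) : EReal))
        = ⨆ y, lam1 (x, y) + ((φ x : ℝ) : EReal) := by
      intro x
      rw [← iSup_add_const, K1 x, iSup_add_const]
    have h5 : (⨆ p : X × X, lam1 p + ((φ p.1 : ℝ) : EReal))
        = ⨆ i, ⨆ y, lam1 (i, y) + ((φ i : ℝ) : EReal) :=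
      iSup_prod (f := fun p : X × X => lam1 p + ((φ p.1 : ℝ) : EReal))
    rw [iSup_congr h1, ← h5]
    have h2 := dens_rep hξ₁.1 (φ.comp ContinuousMap.fst)
    have h3 : ∀ p : X × X, dens ξ₁ p + (((φ.comp ContinuousMap.fst) p : ℝ) : EReal)
        = lam1 p + ((φ p.1 : ℝ) : EReal) := fun p => rfl
    rw [iSup_congr h3] at h2
    rw [h2]
    have : ξ₁ (φ.comp ContinuousMap.fst) = μ φ := by
      rw [show ξ₁ (φ.comp ContinuousMap.fst) = IPMmap ContinuousMap.fst ξ₁ φ from rfl, hξ₁.2.1]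
    rw [this]
  have hsnd : ∀ φ : C(X, ℝ), (⨆ p : X × X, lam p + ((φ p.2 : ℝ) : EReal))
      = ((κ φ : ℝ) : EReal) := by
    intro φ
    rw [iSup_prod]
    have h1 : ∀ x : X, (⨆ z, lam (x, z) + ((φ z : ℝ) : EReal))
        = ⨆ z, lam (x, z) + ((φ z : ℝ) : EReal) := fun x => rfl
    have hcomm : (⨆ x, ⨆ z, lam (x, z) + ((φ z : ℝ) : EReal))
        = ⨆ z, ⨆ x, lam (x, z) + ((φ z : ℝ) : EReal) := iSup_comm
    rw [hcomm]
    have h2 : ∀ z : X, (⨆ x, lam (x, z) + ((φ z : ℝ) : EReal))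
        = ⨆ y, lam2 (y, z) + ((φ z : ℝ) : EReal) := by
      intro z
      rw [← iSup_add_const, K2 z, iSup_add_const]
    rw [iSup_congr h2]
    have hcomm2 : (⨆ z, ⨆ y, lam2 (y, z) + ((φ z : ℝ) : EReal))
        = ⨆ y, ⨆ z, lam2 (y, z) + ((φ z : ℝ) : EReal) := iSup_comm
    have h5 : (⨆ q : X × X, lam2 q + ((φ q.2 : ℝ) : EReal))
        = ⨆ y, ⨆ z, lam2 (y, z) + ((φ z : ℝ) : EReal) :=
      iSup_prod (f := fun q : X × X => lam2 q + ((φ q.2 : ℝ) : EReal))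
    rw [hcomm2, ← h5]
    have h3 := dens_rep hξ₂.1 (φ.comp ContinuousMap.snd)
    have h4 : ∀ q : X × X, dens ξ₂ q + (((φ.comp ContinuousMap.snd) q : ℝ) : EReal)
        = lam2 q + ((φ q.2 : ℝ) : EReal) := fun q => rfl
    rw [iSup_congr h4] at h3
    rw [h3]
    have : ξ₂ (φ.comp ContinuousMap.snd) = κ φ := by
      rw [show ξ₂ (φ.comp ContinuousMap.snd) = IPMmap ContinuousMap.snd ξ₂ φ from rfl, hξ₂.2.2]
    rw [this]
  have hmem : Iof lam ∈ AdmSet μ κ := Iof_mem_AdmSet h0 hs hfst hsnd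
  -- support estimate
  have hr₁0 : 0 ≤ r₁ := by
    rw [← hr₁]
    exact Real.sSup_nonneg (by rintro r ⟨p, _, rfl⟩; exact dist_nonneg)
  have hr₂0 : 0 ≤ r₂ := by
    rw [← hr₂]
    exact Real.sSup_nonneg (by rintro r ⟨p, _, rfl⟩; exact dist_nonneg)
  set A : Set (X × X) := {p : X × X | dist p.1 p.2 ≤ r₁ + r₂} with hA
  have hAc : IsClosed A := isClosed_le (by continuity) continuous_const
  have hsub : ∀ p : X × X, lam p ≠ ⊥ → p ∈ A := by
    intro p hp
    have h1 : ∃ y : X, lam1 (p.1, y) + lam2 (y, p.2) + (-(lnu y)) ≠ ⊥ := by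
      by_contra hall
      push_neg at hall
      exact hp (by rw [hlam]; exact iSup_eq_bot.mpr hall)
    obtain ⟨y, hy⟩ := h1
    have hb1 : lam1 (p.1, y) ≠ ⊥ := by
      intro hb
      exact hy (by rw [hb, EReal.bot_add, EReal.bot_add])
    have hb2 : lam2 (y, p.2) ≠ ⊥ := by
      intro hb
      exact hy (by rw [hb, EReal.add_bot, EReal.bot_add])
    have hm1 : (p.1, y) ∈ IPMsupp ξ₁ := mem_supp_of_dens_ne_bot hb1
    have hm2 : (y, p.2) ∈ IPMsupp ξ₂ := mem_supp_of_dens_ne_bot hb2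
    have hd1 : dist p.1 y ≤ r₁ := by
      rw [← hr₁]
      exact le_csSup (distimg_bddAbove _) ⟨(p.1, y), hm1, rfl⟩
    have hd2 : dist y p.2 ≤ r₂ := by
      rw [← hr₂]
      exact le_csSup (distimg_bddAbove _) ⟨(y, p.2), hm2, rfl⟩
    show dist p.1 p.2 ≤ r₁ + r₂
    calc dist p.1 p.2 ≤ dist p.1 y + dist y p.2 := dist_triangle _ _ _
      _ ≤ r₁ + r₂ := add_le_add hd1 hd2
  have hsupp : IPMsupp (Iof lam) ⊆ A := supp_Iof_subset h0 hs hAc hsub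
  have hval : sSup ((fun p : X × X => dist p.1 p.2) '' IPMsupp (Iof lam)) ≤ r₁ + r₂ := by
    refine Real.sSup_le ?_ (by linarith)
    rintro r ⟨p, hp, rfl⟩
    exact hsupp hp
  calc rhoID (fun x y : X => dist x y) μ κ
      ≤ sSup ((fun p : X × X => dist p.1 p.2) '' IPMsupp (Iof lam)) :=
        csInf_le rhoset_bddBelow ⟨Iof lam, hmem, rfl⟩
    _ ≤ r₁ + r₂ := hval
    _ ≤ rhoID (fun x y : X => dist x y) μ ν + rhoID (fun x y : X => dist x y) ν κ + η := by
        linarith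
end C7

end RhoI

/-- On a metric compactum, `ρ_I` is a metric on the set of idempotent probability measures:
nonnegative, vanishing exactly on the diagonal, symmetric, and satisfying the triangle
inequality. -/
theorem rhoI_is_metric {X : Type*} [MetricSpace X] [CompactSpace X] :
    (∀ μ ν : C(X, ℝ) → ℝ, IsIPM X μ → IsIPM X ν → 0 ≤ rhoID (fun x y : X => dist x y) μ ν) ∧
    (∀ μ : C(X, ℝ) → ℝ, IsIPM X μ → rhoID (fun x y : X => dist x y) μ μ = 0) ∧
    (∀ μ ν : C(X, ℝ) → ℝ, IsIPM X μ → IsIPM X ν →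
      rhoID (fun x y : X => dist x y) μ ν = rhoID (fun x y : X => dist x y) ν μ) ∧
    (∀ μ ν : C(X, ℝ) → ℝ, IsIPM X μ → IsIPM X ν →
      rhoID (fun x y : X => dist x y) μ ν = 0 → μ = ν) ∧
    (∀ μ ν κ : C(X, ℝ) → ℝ, IsIPM X μ → IsIPM X ν → IsIPM X κ →
      rhoID (fun x y : X => dist x y) μ κ ≤
        rhoID (fun x y : X => dist x y) μ ν + rhoID (fun x y : X => dist x y) ν κ) :=
  ⟨fun μ ν _ _ => RhoI.rhoI_nonneg μ ν,
   fun μ hμ => RhoI.rhoI_self hμ,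
   fun μ ν hμ hν => RhoI.rhoI_symm hμ hν,
   fun μ ν hμ hν h => RhoI.rhoI_eq_zero_imp hμ hν h,
   fun μ ν κ hμ hν hκ => RhoI.rhoI_triangle hμ hν hκ⟩
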